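/- Let N be a finite set of items that is packable into the bin of width W and height H, and let w̃, h̃ : N → ℝ≥0 be conservative scales, i.e., for every S ⊆ N: if Σ_{j∈S} w_j <= W then Σ_{j∈S} w̃_j <= W, and if Σ_{j∈S} h_j <= H then Σ_{j∈S} h̃_j <= H. Then Σ_{j∈N} w̃_j · h̃_j <= W·H. -/

import Mathlib

/-- A packing of the finite set `S` of items into a bin of width `W` and height `H`:
coordinates `x y` place each item inside the bin and the open rectangles of distinct
items are disjoint. -/
def IsPacking {ι : Type*} (w h : ι → ℝ) (W H : ℝ) (S : Finset ι) (x y : ι → ℝ) : Prop :=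
  (∀ j ∈ S, 0 ≤ x j ∧ x j + w j ≤ W ∧ 0 ≤ y j ∧ y j + h j ≤ H) ∧
  ∀ i ∈ S, ∀ j ∈ S, i ≠ j →
    Disjoint (Set.Ioo (x i) (x i + w i) ×ˢ Set.Ioo (y i) (y i + h i))
             (Set.Ioo (x j) (x j + w j) ×ˢ Set.Ioo (y j) (y j + h j))

/-- `S` is packable into the bin of width `W` and height `H`. -/
def Packable {ι : Type*} (w h : ι → ℝ) (W H : ℝ) (S : Finset ι) : Prop :=
  ∃ x y : ι → ℝ, IsPacking w h W H S x y

/-- Swapping the two coordinates of a packing. -/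
lemma IsPacking.swap {ι : Type*} {w h : ι → ℝ} {W H : ℝ} {S : Finset ι} {x y : ι → ℝ}
    (hp : IsPacking w h W H S x y) : IsPacking h w H W S y x := by
  obtain ⟨hb, hd⟩ := hp
  refine ⟨fun j hj => by obtain ⟨a, b, c, d⟩ := hb j hj; exact ⟨c, d, a, b⟩, ?_⟩
  intro i hi j hj hij
  have := hd i hi j hj hij
  rw [Set.disjoint_left] at this ⊢
  rintro ⟨a, b⟩ ⟨ha, hb'⟩ ⟨hc, hd'⟩
  exact this (a := (b, a)) ⟨hb', ha⟩ ⟨hd', hc⟩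

/-- A "chain" of items (pairwise separated in the x-direction) whose elements all are
nonnegative and end before `t` has total width at most `t`. -/
lemma chain_sum_le {ι : Type*} [DecidableEq ι] (w x : ι → ℝ) :
    ∀ (C : Finset ι), (∀ i ∈ C, 0 < w i) → (∀ i ∈ C, 0 ≤ x i) →
    (∀ i ∈ C, ∀ k ∈ C, i ≠ k → x i + w i ≤ x k ∨ x k + w k ≤ x i) →
    ∀ t : ℝ, 0 ≤ t → (∀ i ∈ C, x i + w i ≤ t) → ∑ i ∈ C, w i ≤ t := by
  intro C
  induction C using Finset.strongInduction with
  | _ C ih =>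
    intro hw hx hchain t ht hle
    rcases C.eq_empty_or_nonempty with rfl | hne
    · simpa
    obtain ⟨m, hm, hmax⟩ := C.exists_max_image x hne
    have hmem : ∀ i ∈ C.erase m, x i + w i ≤ x m := by
      intro i hi
      have hiC := Finset.mem_of_mem_erase hi
      have hne' := Finset.ne_of_mem_erase hi
      rcases hchain i hiC m hm hne' with h1 | h1
      · exact h1
      · have := hmax i hiC
        have := hw m hm
        linarith
    have hsum : ∑ i ∈ C.erase m, w i ≤ x m :=
      ih (C.erase m) (Finset.erase_ssubset hm)
        (fun i hi => hw i (Finset.mem_of_mem_erase hi))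
        (fun i hi => hx i (Finset.mem_of_mem_erase hi))
        (fun i hi k hk hik =>
          hchain i (Finset.mem_of_mem_erase hi) k (Finset.mem_of_mem_erase hk) hik)
        (x m) (hx m hm) hmem
    have h2 : x m + w m ≤ t := hle m hm
    calc ∑ i ∈ C, w i = w m + ∑ i ∈ C.erase m, w i := (Finset.add_sum_erase C w hm).symm
      _ ≤ t := by linarith

/-- Repacking lemma: a width-conservative scale of a packable set is packable
(with the original heights and y-coordinates). -/
lemma repack {ι : Type*} [DecidableEq ι] (w h : ι → ℝ) (W H : ℝ)
    (hw : ∀ j, 0 < w j)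
    (N : Finset ι) (x y : ι → ℝ) (hp : IsPacking w h W H N x y)
    (w' : ι → ℝ)
    (hcs : ∀ S ⊆ N, ∑ j ∈ S, w j ≤ W → ∑ j ∈ S, w' j ≤ W) :
    ∃ x' : ι → ℝ, IsPacking w' h W H N x' y := by
  classical
  obtain ⟨hb, hd⟩ := hp
  -- chains of items whose x-interval ends before `x j`
  set chains : ι → Finset (Finset ι) := fun j =>
    N.powerset.filter (fun C =>
      (∀ i ∈ C, ∀ k ∈ C, i ≠ k → x i + w i ≤ x k ∨ x k + w k ≤ x i) ∧
      ∀ i ∈ C, x i + w i ≤ x j) with hchains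
  have hempty : ∀ j, (∅ : Finset ι) ∈ chains j := by
    intro j
    simp [hchains]
  have hnonempty : ∀ j, (chains j).Nonempty := fun j => ⟨∅, hempty j⟩
  set x' : ι → ℝ := fun j => (chains j).sup' (hnonempty j) (fun C => ∑ i ∈ C, w' i) with hx'
  -- x' j ≥ 0
  have hx'nonneg : ∀ j, 0 ≤ x' j := by
    intro j
    have := Finset.le_sup' (f := fun C => ∑ i ∈ C, w' i) (hempty j)
    simp only [Finset.sum_empty] at this
    exact this
  -- a chain in `chains j` together with `j` has w'-sum at most W, for j ∈ N
  have hkey : ∀ j ∈ N, ∀ C ∈ chains j, ∑ i ∈ C, w' i + w' j ≤ W := by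
    intro j hjN C hC
    rw [hchains, Finset.mem_filter, Finset.mem_powerset] at hC
    obtain ⟨hCN, hchain, hlt⟩ := hC
    have hjC : j ∉ C := by
      intro hjC
      have := hlt j hjC
      have := hw j
      linarith
    have hCj : insert j C ⊆ N := by
      intro i hi
      rcases Finset.mem_insert.mp hi with rfl | hi
      · exact hjN
      · exact hCN hi
    have hchain' : ∀ a ∈ insert j C, ∀ b ∈ insert j C, a ≠ b →
        x a + w a ≤ x b ∨ x b + w b ≤ x a := by
      intro a ha b hb hab
      rcases Finset.mem_insert.mp ha with ha' | ha' <;>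
        rcases Finset.mem_insert.mp hb with hb' | hb'
      · exact absurd (ha'.trans hb'.symm) hab
      · exact Or.inr (by rw [ha']; exact hlt b hb')
      · exact Or.inl (by rw [hb']; exact hlt a ha')
      · exact hchain a ha' b hb' hab
    have hWsum : ∑ i ∈ insert j C, w i ≤ W := by
      refine chain_sum_le w x (insert j C) (fun i _ => hw i)
        (fun i hi => (hb i (hCj hi)).1) hchain' W ?_ (fun i hi => (hb i (hCj hi)).2.1)
      have := hb j hjN
      have := hw j
      linarith [(hb j hjN).1, (hb j hjN).2.1]
    have := hcs (insert j C) hCj hWsum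
    rwa [Finset.sum_insert hjC, add_comm] at this
  -- x' j + w' j ≤ W for j ∈ N
  have hx'W : ∀ j ∈ N, x' j + w' j ≤ W := by
    intro j hj
    obtain ⟨C, hC, hCeq⟩ := Finset.exists_mem_eq_sup' (hnonempty j) (fun C => ∑ i ∈ C, w' i)
    rw [hx']
    simp only
    rw [hCeq]
    exact hkey j hj C hC
  -- monotonicity: separated originals stay separated
  have hmono : ∀ i ∈ N, ∀ j, x i + w i ≤ x j → x' i + w' i ≤ x' j := by
    intro i hiN j hij
    obtain ⟨C, hC, hCeq⟩ := Finset.exists_mem_eq_sup' (hnonempty i) (fun C => ∑ k ∈ C, w' k)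
    rw [hchains, Finset.mem_filter, Finset.mem_powerset] at hC
    obtain ⟨hCN, hchain, hlt⟩ := hC
    have hiC : i ∉ C := by
      intro hiC
      have := hlt i hiC
      have := hw i
      linarith
    have hmem : insert i C ∈ chains j := by
      rw [hchains, Finset.mem_filter, Finset.mem_powerset]
      refine ⟨?_, ?_, ?_⟩
      · intro k hk
        rcases Finset.mem_insert.mp hk with rfl | hk
        · exact hiN
        · exact hCN hk
      · intro a ha b hb hab
        rcases Finset.mem_insert.mp ha with ha' | ha' <;>
          rcases Finset.mem_insert.mp hb with hb' | hb'
        · exact absurd (ha'.trans hb'.symm) hab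
        · exact Or.inr (by rw [ha']; exact hlt b hb')
        · exact Or.inl (by rw [hb']; exact hlt a ha')
        · exact hchain a ha' b hb' hab
      · intro k hk
        rcases Finset.mem_insert.mp hk with hk' | hk'
        · rw [hk']; exact hij
        · have := hlt k hk'
          have := hw i
          linarith
    have := Finset.le_sup' (f := fun C => ∑ k ∈ C, w' k) hmem
    rw [Finset.sum_insert hiC] at this
    have hxi : x' i = ∑ k ∈ C, w' k := hCeq
    rw [hx']
    simp only
    rw [hxi] at *
    linarith
  refine ⟨x', ⟨fun j hj => ⟨hx'nonneg j, hx'W j hj, (hb j hj).2.2⟩, ?_⟩⟩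
  intro i hi j hj hij
  by_cases hy : Disjoint (Set.Ioo (y i) (y i + h i)) (Set.Ioo (y j) (y j + h j))
  · exact Set.Disjoint.set_prod_right hy _ _
  -- y-intervals overlap; from original disjointness x-intervals are separated
  obtain ⟨t, hti, htj⟩ := Set.not_disjoint_iff.mp hy
  have hsep : x i + w i ≤ x j ∨ x j + w j ≤ x i := by
    by_contra hcon
    push_neg at hcon
    obtain ⟨h1, h2⟩ := hcon
    set s := (max (x i) (x j) + min (x i + w i) (x j + w j)) / 2 with hs
    have hwi := hw i
    have hwj := hw j
    have hmm : max (x i) (x j) < min (x i + w i) (x j + w j) := by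
      rcases max_cases (x i) (x j) with ⟨he, _⟩ | ⟨he, _⟩ <;>
        rcases min_cases (x i + w i) (x j + w j) with ⟨hm, _⟩ | ⟨hm, _⟩ <;>
        rw [he, hm] <;> linarith
    have hsl : max (x i) (x j) < s := by rw [hs]; linarith
    have hsr : s < min (x i + w i) (x j + w j) := by rw [hs]; linarith
    have hs1 : x i < s ∧ s < x i + w i :=
      ⟨lt_of_le_of_lt (le_max_left _ _) hsl, lt_of_lt_of_le hsr (min_le_left _ _)⟩
    have hs2 : x j < s ∧ s < x j + w j :=
      ⟨lt_of_le_of_lt (le_max_right _ _) hsl, lt_of_lt_of_le hsr (min_le_right _ _)⟩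
    have hdij := hd i hi j hj hij
    rw [Set.disjoint_left] at hdij
    exact hdij (a := (s, t)) ⟨⟨hs1.1, hs1.2⟩, hti⟩ ⟨⟨hs2.1, hs2.2⟩, htj⟩
  have hsep' : x' i + w' i ≤ x' j ∨ x' j + w' j ≤ x' i := by
    rcases hsep with h1 | h1
    · exact Or.inl (hmono i hi j h1)
    · exact Or.inr (hmono j hj i h1)
  rcases hsep' with h1 | h1
  · refine Set.Disjoint.set_prod_left ?_ _ _
    rw [Set.disjoint_left]
    rintro a ⟨ha1, ha2⟩ ⟨ha3, ha4⟩
    linarith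
  · refine Set.Disjoint.set_prod_left ?_ _ _
    rw [Set.disjoint_left]
    rintro a ⟨ha1, ha2⟩ ⟨ha3, ha4⟩
    linarith

open MeasureTheory in
/-- Packed rectangles with nonnegative dimensions have total area at most the bin area. -/
lemma area_le {ι : Type*} (w h : ι → ℝ) (W H : ℝ) (hW : 0 ≤ W) (hH : 0 ≤ H)
    (N : Finset ι) (x y : ι → ℝ) (hp : IsPacking w h W H N x y)
    (hw : ∀ j ∈ N, 0 ≤ w j) (hh : ∀ j ∈ N, 0 ≤ h j) :
    ∑ j ∈ N, w j * h j ≤ W * H := by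
  obtain ⟨hb, hd⟩ := hp
  set R : ι → Set (ℝ × ℝ) := fun j =>
    Set.Ioo (x j) (x j + w j) ×ˢ Set.Ioo (y j) (y j + h j) with hR
  have hvol : ∀ j, volume (R j) = ENNReal.ofReal (w j) * ENNReal.ofReal (h j) := by
    intro j
    rw [hR]
    simp only
    rw [show (volume : Measure (ℝ × ℝ)) = (volume : Measure ℝ).prod volume from rfl,
      MeasureTheory.Measure.prod_prod, Real.volume_Ioo, Real.volume_Ioo]
    ring_nf
  have hsub : ∀ j ∈ N, R j ⊆ Set.Icc 0 W ×ˢ Set.Icc 0 H := by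
    intro j hj
    obtain ⟨h1, h2, h3, h4⟩ := hb j hj
    rintro ⟨a, b⟩ ⟨⟨ha1, ha2⟩, hb1, hb2⟩
    exact ⟨⟨by linarith, by linarith⟩, ⟨by linarith, by linarith⟩⟩
  have hdisj : (↑N : Set ι).PairwiseDisjoint R := by
    intro i hi j hj hij
    exact hd i hi j hj hij
  have hmeas : ∀ j ∈ N, MeasurableSet (R j) := by
    intro j _
    exact (measurableSet_Ioo.prod measurableSet_Ioo)
  have h1 : ∑ j ∈ N, volume (R j) = volume (⋃ j ∈ N, R j) :=
    (measure_biUnion_finset hdisj hmeas).symm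
  have h2 : volume (⋃ j ∈ N, R j) ≤ volume (Set.Icc (0:ℝ) W ×ˢ Set.Icc (0:ℝ) H) := by
    apply measure_mono
    exact Set.iUnion₂_subset hsub
  have h3 : volume (Set.Icc (0:ℝ) W ×ˢ Set.Icc (0:ℝ) H) = ENNReal.ofReal (W * H) := by
    rw [show (volume : Measure (ℝ × ℝ)) = (volume : Measure ℝ).prod volume from rfl,
      MeasureTheory.Measure.prod_prod, Real.volume_Icc, Real.volume_Icc,
      ← ENNReal.ofReal_mul (by linarith)]
    ring_nf
  have h4 : ENNReal.ofReal (∑ j ∈ N, w j * h j) ≤ ENNReal.ofReal (W * H) := by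
    rw [ENNReal.ofReal_sum_of_nonneg (fun j hj => mul_nonneg (hw j hj) (hh j hj))]
    calc ∑ j ∈ N, ENNReal.ofReal (w j * h j)
        = ∑ j ∈ N, volume (R j) := by
          refine Finset.sum_congr rfl (fun j hj => ?_)
          rw [hvol j, ENNReal.ofReal_mul (hw j hj)]
      _ ≤ ENNReal.ofReal (W * H) := by rw [h1]; exact h2.trans h3.le
  have := (ENNReal.ofReal_le_ofReal_iff (mul_nonneg hW hH)).mp h4
  exact this

theorem stmt_10 {ι : Type*} [DecidableEq ι] (w h : ι → ℝ) (W H : ℝ)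
    (hW : 0 < W) (hH : 0 < H) (hw : ∀ j, 0 < w j) (hh : ∀ j, 0 < h j)
    (N : Finset ι) (hN : Packable w h W H N)
    (w' h' : ι → ℝ) (hw' : ∀ j ∈ N, 0 ≤ w' j) (hh' : ∀ j ∈ N, 0 ≤ h' j)
    (hcsW : ∀ S ⊆ N, ∑ j ∈ S, w j ≤ W → ∑ j ∈ S, w' j ≤ W)
    (hcsH : ∀ S ⊆ N, ∑ j ∈ S, h j ≤ H → ∑ j ∈ S, h' j ≤ H) :
    ∑ j ∈ N, w' j * h' j ≤ W * H := by
  obtain ⟨x, y, hp⟩ := hN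
  obtain ⟨x1, hp1⟩ := repack w h W H hw N x y hp w' hcsW
  obtain ⟨y1, hp2⟩ := repack h w' H W hh N y x1 hp1.swap h' hcsH
  exact area_le w' h' W H hW.le hH.le N x1 y1 hp2.swap hw' hh'
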